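/- Let F be uniformly elliptic with constants 0 < λ ≤ Λ (i.e. M⁻(N) ≤ F(M+N) − F(M) ≤ M⁺(N) for all symmetric M, N) and F(0) = 0. Let M be a symmetric n×n matrix and ν a unit vector with F(M) = 0. If M̃ is a symmetric matrix with ‖M̃ − M‖ ≤ ε, then there exists t ∈ ℝ with |t| ≤ (nΛ/λ)·ε such that F(M̃ + t·(ν⊥ ⊗ ν⊥)) = 0, where ν⊥ is any unit vector orthogonal to ν. -/

import Mathlib

open scoped Matrix.Norms.L2Operator RealInnerProductSpace

/-- The Pucci minimal operator `M⁻_{λ,Λ}(N)`. -/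
noncomputable def pucciMinus {n : ℕ} (lam Lam : ℝ) (N : Matrix (Fin n) (Fin n) ℝ)
    (hN : N.IsHermitian) : ℝ :=
  Lam * ∑ i ∈ Finset.univ.filter (fun i => hN.eigenvalues i < 0), hN.eigenvalues i +
    lam * ∑ i ∈ Finset.univ.filter (fun i => 0 < hN.eigenvalues i), hN.eigenvalues i

/-- The Pucci maximal operator `M⁺_{λ,Λ}(N)`. -/
noncomputable def pucciPlus {n : ℕ} (lam Lam : ℝ) (N : Matrix (Fin n) (Fin n) ℝ)
    (hN : N.IsHermitian) : ℝ :=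
  lam * ∑ i ∈ Finset.univ.filter (fun i => hN.eigenvalues i < 0), hN.eigenvalues i +
    Lam * ∑ i ∈ Finset.univ.filter (fun i => 0 < hN.eigenvalues i), hN.eigenvalues i

/-- trace equals sum of eigenvalues, real case -/
lemma aux_trace_eq_sum_eig {n : ℕ} (N : Matrix (Fin n) (Fin n) ℝ) (hN : N.IsHermitian) :
    N.trace = ∑ i, hN.eigenvalues i := by
  rw [hN.trace_eq_sum_eigenvalues]
  simp

lemma aux_eig_nonneg {n : ℕ} (N : Matrix (Fin n) (Fin n) ℝ) (hN : N.IsHermitian)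
    (h : ∀ x : Fin n → ℝ, 0 ≤ dotProduct x (N.mulVec x)) (i : Fin n) : 0 ≤ hN.eigenvalues i := by
  rw [hN.eigenvalues_eq]
  simpa using h (hN.eigenvectorBasis i)

lemma aux_eig_nonpos {n : ℕ} (N : Matrix (Fin n) (Fin n) ℝ) (hN : N.IsHermitian)
    (h : ∀ x : Fin n → ℝ, dotProduct x (N.mulVec x) ≤ 0) (i : Fin n) : hN.eigenvalues i ≤ 0 := by
  rw [hN.eigenvalues_eq]
  simpa using h (hN.eigenvectorBasis i)

lemma aux_pucci_nonneg {n : ℕ} (lam Lam : ℝ) (N : Matrix (Fin n) (Fin n) ℝ)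
    (hN : N.IsHermitian) (h : ∀ i, 0 ≤ hN.eigenvalues i) :
    pucciMinus lam Lam N hN = lam * N.trace ∧ pucciPlus lam Lam N hN = Lam * N.trace := by
  have h1 : ∑ i ∈ Finset.univ.filter (fun i => hN.eigenvalues i < 0), hN.eigenvalues i = 0 :=
    Finset.sum_eq_zero fun i hi => absurd (Finset.mem_filter.mp hi).2 (not_lt.mpr (h i))
  have h2 : ∑ i ∈ Finset.univ.filter (fun i => 0 < hN.eigenvalues i), hN.eigenvalues i
      = N.trace := by
    rw [aux_trace_eq_sum_eig N hN]
    exact Finset.sum_subset (Finset.filter_subset _ _)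
      (fun i _ hi => le_antisymm (by simpa using fun h' => hi (Finset.mem_filter.mpr ⟨Finset.mem_univ i, h'⟩)) (h i))
  constructor <;> simp [pucciMinus, pucciPlus, h1, h2]

lemma aux_pucci_nonpos {n : ℕ} (lam Lam : ℝ) (N : Matrix (Fin n) (Fin n) ℝ)
    (hN : N.IsHermitian) (h : ∀ i, hN.eigenvalues i ≤ 0) :
    pucciMinus lam Lam N hN = Lam * N.trace ∧ pucciPlus lam Lam N hN = lam * N.trace := by
  have h1 : ∑ i ∈ Finset.univ.filter (fun i => 0 < hN.eigenvalues i), hN.eigenvalues i = 0 :=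
    Finset.sum_eq_zero fun i hi => absurd (Finset.mem_filter.mp hi).2 (not_lt.mpr (h i))
  have h2 : ∑ i ∈ Finset.univ.filter (fun i => hN.eigenvalues i < 0), hN.eigenvalues i
      = N.trace := by
    rw [aux_trace_eq_sum_eig N hN]
    exact Finset.sum_subset (Finset.filter_subset _ _)
      (fun i _ hi => le_antisymm (h i) (by simpa using fun h' => hi (Finset.mem_filter.mpr ⟨Finset.mem_univ i, h'⟩)))
  constructor <;> simp [pucciMinus, pucciPlus, h1, h2]

lemma aux_eig_abs_le {n : ℕ} (N : Matrix (Fin n) (Fin n) ℝ) (hN : N.IsHermitian) (i : Fin n) :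
    |hN.eigenvalues i| ≤ ‖N‖ := by
  have hv := hN.mulVec_eigenvectorBasis i
  have hle := N.l2_opNorm_mulVec (hN.eigenvectorBasis i)
  have hnv : ‖hN.eigenvectorBasis i‖ = 1 := hN.eigenvectorBasis.orthonormal.1 i
  rw [hnv, mul_one] at hle
  have : ‖(EuclideanSpace.equiv (Fin n) ℝ).symm (N.mulVec ⇑(hN.eigenvectorBasis i))‖
      = |hN.eigenvalues i| := by
    rw [hv]
    have : (EuclideanSpace.equiv (Fin n) ℝ).symm (hN.eigenvalues i • ⇑(hN.eigenvectorBasis i))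
        = hN.eigenvalues i • hN.eigenvectorBasis i := rfl
    rw [this, norm_smul, hnv, mul_one, Real.norm_eq_abs]
  linarith [this ▸ hle]

/-- Correcting a matrix `M̃` close to a zero of `F` in the rank-one direction `ν⊥ ⊗ ν⊥`. -/
theorem zero_of_F_rank_one_correction {n : ℕ} (lam Lam : ℝ) (hlam : 0 < lam)
    (hle : lam ≤ Lam) (F : Matrix (Fin n) (Fin n) ℝ → ℝ)
    (hellip : ∀ (M N : Matrix (Fin n) (Fin n) ℝ), M.IsHermitian → ∀ (hN : N.IsHermitian),
      pucciMinus lam Lam N hN ≤ F (M + N) - F M ∧ F (M + N) - F M ≤ pucciPlus lam Lam N hN)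
    (hF0 : F 0 = 0)
    (M Mt : Matrix (Fin n) (Fin n) ℝ) (hM : M.IsHermitian) (hMt : Mt.IsHermitian)
    (ν νperp : EuclideanSpace ℝ (Fin n)) (hν : ‖ν‖ = 1) (hνperp : ‖νperp‖ = 1)
    (horth : ⟪ν, νperp⟫ = 0)
    (hFM : F M = 0) (ε : ℝ) (hε : 0 ≤ ε) (hclose : ‖Mt - M‖ ≤ ε) :
    ∃ t : ℝ, |t| ≤ ((n : ℝ) * Lam / lam) * ε ∧
      F (Mt + t • Matrix.of (fun i j => νperp i * νperp j)) = 0 := by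
  classical
  set P : Matrix (Fin n) (Fin n) ℝ := Matrix.of (fun i j => νperp i * νperp j) with hPdef
  have hLam : 0 < Lam := lt_of_lt_of_le hlam hle
  -- P is Hermitian
  have hP : P.IsHermitian := by
    ext i j
    simp [hPdef, Matrix.conjTranspose_apply, mul_comm]
  have hsP : ∀ s : ℝ, (s • P).IsHermitian := fun s => by
    unfold Matrix.IsHermitian
    rw [Matrix.conjTranspose_smul, hP.eq]
    simp
  -- quadratic form of P
  have hquad : ∀ (x : Fin n → ℝ), dotProduct x (P.mulVec x) = (∑ j, νperp j * x j)^2 := by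
    intro x
    simp only [dotProduct, Matrix.mulVec, hPdef, Matrix.of_apply]
    rw [sq, Finset.sum_mul_sum]
    simp only [Finset.mul_sum]
    refine Finset.sum_congr rfl fun i _ => Finset.sum_congr rfl fun j _ => by ring
  -- trace of P
  have htraceP : P.trace = 1 := by
    have h1 : ⟪νperp, νperp⟫ = (1 : ℝ) := by
      rw [real_inner_self_eq_norm_sq, hνperp]; norm_num
    rw [← h1]
    simp [Matrix.trace, Matrix.diag, hPdef, PiLp.inner_apply, RCLike.inner_apply]
    rw [EuclideanSpace.norm_sq_eq]
    simp [sq]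
  -- pucci operators of s • P
  have hpucci_pos : ∀ s : ℝ, 0 ≤ s →
      pucciMinus lam Lam (s • P) (hsP s) = lam * s ∧
      pucciPlus lam Lam (s • P) (hsP s) = Lam * s := by
    intro s hs
    have heig : ∀ i, 0 ≤ (hsP s).eigenvalues i := by
      apply aux_eig_nonneg
      intro x
      rw [Matrix.smul_mulVec, dotProduct_smul, hquad]
      positivity
    have := aux_pucci_nonneg lam Lam (s • P) (hsP s) heig
    rwa [Matrix.trace_smul, htraceP, smul_eq_mul, mul_one] at this
  have hpucci_neg : ∀ s : ℝ, s ≤ 0 →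
      pucciMinus lam Lam (s • P) (hsP s) = Lam * s ∧
      pucciPlus lam Lam (s • P) (hsP s) = lam * s := by
    intro s hs
    have heig : ∀ i, (hsP s).eigenvalues i ≤ 0 := by
      apply aux_eig_nonpos
      intro x
      rw [Matrix.smul_mulVec, dotProduct_smul, hquad]
      exact mul_nonpos_of_nonpos_of_nonneg hs (sq_nonneg _)
    have := aux_pucci_nonpos lam Lam (s • P) (hsP s) heig
    rwa [Matrix.trace_smul, htraceP, smul_eq_mul, mul_one] at this
  -- the function g
  set g : ℝ → ℝ := fun t => F (Mt + t • P) with hgdef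
  have hherm : ∀ t : ℝ, (Mt + t • P).IsHermitian := fun t => hMt.add (hsP t)
  -- monotonicity / Lipschitz bounds
  have hkey : ∀ s t : ℝ, s ≤ t →
      lam * (t - s) ≤ g t - g s ∧ g t - g s ≤ Lam * (t - s) := by
    intro s t hst
    have hE := hellip (Mt + s • P) ((t - s) • P) (hherm s) (hsP (t - s))
    have hrw : Mt + s • P + (t - s) • P = Mt + t • P := by
      have hst' : s + (t - s) = t := by ring
      rw [add_assoc, ← add_smul, hst']
    rw [hrw] at hE
    have hp := hpucci_pos (t - s) (by linarith)
    rw [hp.1, hp.2] at hE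
    exact hE
  -- continuity of g
  have habs : ∀ s t : ℝ, s ≤ t → |g t - g s| ≤ Lam * (t - s) := by
    intro s t h
    have hk := hkey s t h
    rw [abs_le]
    constructor
    · nlinarith [mul_nonneg hlam.le (sub_nonneg.mpr h), mul_nonneg hLam.le (sub_nonneg.mpr h)]
    · exact hk.2
  have hcont : Continuous g := by
    have : LipschitzWith (Real.toNNReal Lam) g := by
      apply LipschitzWith.of_dist_le_mul
      intro s t
      rw [Real.dist_eq, Real.dist_eq, Real.coe_toNNReal Lam hLam.le]
      rcases le_total s t with h | h
      · calc |g s - g t| = |g t - g s| := abs_sub_comm _ _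
          _ ≤ Lam * (t - s) := habs s t h
          _ = Lam * |s - t| := by rw [abs_of_nonpos (by linarith)]; ring
      · calc |g s - g t| ≤ Lam * (s - t) := habs t s h
          _ = Lam * |s - t| := by rw [abs_of_nonneg (by linarith)]
    exact this.continuous
  -- bound on |F Mt| = |g 0|
  set D : Matrix (Fin n) (Fin n) ℝ := Mt - M with hDdef
  have hD : D.IsHermitian := hMt.sub hM
  have heigD : ∀ i, |hD.eigenvalues i| ≤ ε := fun i =>
    le_trans (aux_eig_abs_le D hD i) hclose
  have hsum_bound : ∀ (S : Finset (Fin n)),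
      |∑ i ∈ S, hD.eigenvalues i| ≤ (n : ℝ) * ε := by
    intro S
    calc |∑ i ∈ S, hD.eigenvalues i| ≤ ∑ i ∈ S, |hD.eigenvalues i| :=
          Finset.abs_sum_le_sum_abs _ _
      _ ≤ ∑ _i ∈ S, ε := Finset.sum_le_sum fun i _ => heigD i
      _ = S.card * ε := by rw [Finset.sum_const, nsmul_eq_mul]
      _ ≤ (n : ℝ) * ε := by
          apply mul_le_mul_of_nonneg_right _ hε
          exact_mod_cast Nat.cast_le.mpr (le_trans (Finset.card_le_card (Finset.subset_univ S)) (by simp))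
  have hFMt : |F Mt| ≤ (n : ℝ) * Lam * ε := by
    have hE := hellip M D hM hD
    have hMD : M + D = Mt := by rw [hDdef]; abel
    rw [hMD, hFM, sub_zero] at hE
    have hneg := hsum_bound (Finset.univ.filter (fun i => hD.eigenvalues i < 0))
    have hpos := hsum_bound (Finset.univ.filter (fun i => 0 < hD.eigenvalues i))
    have hnegle : ∑ i ∈ Finset.univ.filter (fun i => hD.eigenvalues i < 0), hD.eigenvalues i ≤ 0 :=
      Finset.sum_nonpos fun i hi => le_of_lt (Finset.mem_filter.mp hi).2
    have hposle : 0 ≤ ∑ i ∈ Finset.univ.filter (fun i => 0 < hD.eigenvalues i), hD.eigenvalues i :=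
      Finset.sum_nonneg fun i hi => le_of_lt (Finset.mem_filter.mp hi).2
    rw [abs_le] at hneg hpos ⊢
    unfold pucciMinus pucciPlus at hE
    constructor
    · nlinarith [hE.1, hneg.1, mul_nonneg hlam.le hposle]
    · nlinarith [hE.2, hpos.2, mul_nonpos_of_nonneg_of_nonpos hlam.le hnegle]
  -- the endpoints
  set T : ℝ := ((n : ℝ) * Lam / lam) * ε with hTdef
  have hT0 : 0 ≤ T := by positivity
  have hlamT : lam * T = (n : ℝ) * Lam * ε := by
    rw [hTdef]; field_simp
  have hgT : 0 ≤ g T := by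
    have h1 := (hkey 0 T hT0).1
    have hg0 : g 0 = F Mt := by simp [hgdef]
    rw [hg0, sub_zero] at h1
    rw [abs_le] at hFMt
    nlinarith
  have hgmT : g (-T) ≤ 0 := by
    have h1 := (hkey (-T) 0 (by linarith)).1
    have hg0 : g 0 = F Mt := by simp [hgdef]
    rw [hg0, sub_neg_eq_add] at h1
    rw [abs_le] at hFMt
    nlinarith
  -- IVT
  have hivt := intermediate_value_Icc (a := -T) (b := T) (by linarith) (hcont.continuousOn (s := Set.Icc (-T) T))
  have h0mem : (0 : ℝ) ∈ Set.Icc (g (-T)) (g T) := ⟨hgmT, hgT⟩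
  obtain ⟨t, ht, hgt⟩ := hivt h0mem
  exact ⟨t, abs_le.mpr ⟨ht.1, ht.2⟩, hgt⟩
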